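/- Assume the Panov-type assumptions (C-1)–(C-6), u₀ ∈ BV(ℝ) with u₀ − u_M compactly supported, the uniform bound |u_j^n| ≤ ℳ, and the CFL condition λ L_g L_β ≤ 1/2. Then the Godunov approximations have uniformly bounded spatial variation: there is a constant K₆ > 0, independent of the mesh size, such that Σ_{j∈ℤ} |u_{j+1}^n − u_j^n| ≤ K₆ for every n. In particular, each u_{j+1}^n − u_j^n satisfies |u_{j+1}^n − u_j^n| ≤ (1/K₂)(|β_{j+1}^n − β_j^n| + |β(x_{j+1},u_{j+1}^n) − β(x_j,u_{j+1}^n)|), where β_j^n = β(x_j,u_j^n). -/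

import Mathlib

open MeasureTheory Filter


lemma aux_ratio {num den L : ℝ} (hsign : 0 ≤ num * den) (habs : |num| ≤ L * |den|)
    (hden : den ≠ 0) : 0 ≤ num / den ∧ num / den ≤ L := by
  have hd : 0 < |den| := abs_pos.mpr hden
  constructor
  · rcases hden.lt_or_gt with h | h
    · have hnum : num ≤ 0 := by nlinarith
      exact div_nonneg_of_nonpos hnum h.le
    · have hnum : 0 ≤ num := by nlinarith
      exact div_nonneg hnum h.le
  · have h1 : num / den ≤ |num / den| := le_abs_self _
    have h2 : |num / den| = |num| / |den| := abs_div _ _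
    have h3 : |num| / |den| ≤ L := by rw [div_le_iff₀ hd]; exact habs
    linarith

lemma sum_abs_le_variation (f : ℝ → ℝ) (hf : BoundedVariationOn f Set.univ)
    (y : ℤ → ℝ) (hy : Monotone y) (s : Finset ℤ) :
    ∑ j ∈ s, |f (y (j + 1)) - f (y j)| ≤ (eVariationOn f Set.univ).toReal := by
  have hvar0 : (0:ℝ) ≤ (eVariationOn f Set.univ).toReal := ENNReal.toReal_nonneg
  rcases s.eq_empty_or_nonempty with rfl | hs
  · simpa using hvar0
  set m := s.min' hs with hm
  set M := s.max' hs with hM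
  set N : ℕ := (M - m).toNat + 1 with hN
  have hsub : s ⊆ Finset.Icc m M := fun j hj =>
    Finset.mem_Icc.mpr ⟨s.min'_le j hj, s.le_max' j hj⟩
  have h1 : ∑ j ∈ s, |f (y (j + 1)) - f (y j)| ≤
      ∑ j ∈ Finset.Icc m M, |f (y (j + 1)) - f (y j)| :=
    Finset.sum_le_sum_of_subset_of_nonneg hsub (fun j _ _ => abs_nonneg _)
  have hmM : m ≤ M := s.min'_le _ (s.max'_mem hs)
  have himg : Finset.Icc m M = (Finset.range N).image (fun i : ℕ => m + (i : ℤ)) := by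
    ext j
    simp only [Finset.mem_Icc, Finset.mem_image, Finset.mem_range]
    constructor
    · rintro ⟨h1, h2⟩
      exact ⟨(j - m).toNat, by omega, by omega⟩
    · rintro ⟨i, hi, rfl⟩; omega
  have h2 : ∑ j ∈ Finset.Icc m M, |f (y (j + 1)) - f (y j)| =
      ∑ i ∈ Finset.range N, |f (y (m + i + 1)) - f (y (m + i))| := by
    rw [himg, Finset.sum_image (by intro a _ b _ h; have h' : m + (a:ℤ) = m + (b:ℤ) := h; omega)]
  set c : ℕ → ℝ := fun i => y (m + (min i N : ℕ)) with hc
  have hcmono : Monotone c := by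
    intro i i' hii'
    exact hy (by
      have : (min i N : ℤ) ≤ (min i' N : ℤ) := by exact_mod_cast min_le_min hii' le_rfl
      omega)
  have key := eVariationOn.sum_le (f := f) (n := N) hcmono (fun i => Set.mem_univ (c i))
  have h3 : ∀ i ∈ Finset.range N, edist (f (c (i + 1))) (f (c i)) =
      ENNReal.ofReal |f (y (m + i + 1)) - f (y (m + i))| := by
    intro i hi
    have hiN : i < N := Finset.mem_range.mp hi
    have e1 : c i = y (m + i) := by simp only [hc, min_eq_left hiN.le]
    have e2 : c (i + 1) = y (m + i + 1) := by
      have : min (i + 1) N = i + 1 := min_eq_left hiN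
      simp only [hc, this]
      congr 1
      push_cast
      ring
    rw [e1, e2, edist_dist, Real.dist_eq]
  rw [Finset.sum_congr rfl h3] at key
  rw [← ENNReal.ofReal_sum_of_nonneg (fun i _ => abs_nonneg _)] at key
  have h4 := (ENNReal.ofReal_le_iff_le_toReal hf).mp key
  linarith

lemma harten_sum (Δ Δ' a e : ℤ → ℝ)
    (ha0 : ∀ j, 0 ≤ a j) (he0 : ∀ j, 0 ≤ e j) (hae : ∀ j, a j + e j ≤ 1)
    (hrec : ∀ j, |Δ' j| ≤ (1 - a j - e j) * |Δ j| + e (j+1) * |Δ (j+1)| + a (j-1) * |Δ (j-1)|)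
    (B : ℝ) (hB : ∀ s : Finset ℤ, ∑ j ∈ s, |Δ j| ≤ B) :
    ∀ s : Finset ℤ, ∑ j ∈ s, |Δ' j| ≤ B := by
  intro s
  set t : Finset ℤ := s ∪ s.image (· + 1) ∪ s.image (· - 1) with ht
  have hst : s ⊆ t := fun j hj => by simp [ht, hj]
  have h1 : ∑ j ∈ s, |Δ' j| ≤
      ∑ j ∈ s, ((1 - a j - e j) * |Δ j| + e (j+1) * |Δ (j+1)| + a (j-1) * |Δ (j-1)|) :=
    Finset.sum_le_sum (fun j _ => hrec j)
  have hsplit : ∑ j ∈ s, ((1 - a j - e j) * |Δ j| + e (j+1) * |Δ (j+1)| + a (j-1) * |Δ (j-1)|)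
      = ∑ j ∈ s, (1 - a j - e j) * |Δ j| + ∑ j ∈ s, e (j+1) * |Δ (j+1)|
        + ∑ j ∈ s, a (j-1) * |Δ (j-1)| := by
    rw [Finset.sum_add_distrib, Finset.sum_add_distrib]
  have him1 : ∑ j ∈ s, e (j+1) * |Δ (j+1)| = ∑ j ∈ s.image (· + 1), e j * |Δ j| := by
    rw [Finset.sum_image (by intro x _ y _ h; have h' : x + 1 = y + 1 := h; omega)]
  have him2 : ∑ j ∈ s, a (j-1) * |Δ (j-1)| = ∑ j ∈ s.image (· - 1), a j * |Δ j| := by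
    rw [Finset.sum_image (by intro x _ y _ h; have h' : x - 1 = y - 1 := h; omega)]
  have e1 : ∑ j ∈ s, (1 - a j - e j) * |Δ j| ≤ ∑ j ∈ t, (1 - a j - e j) * |Δ j| :=
    Finset.sum_le_sum_of_subset_of_nonneg hst (fun j _ _ =>
      mul_nonneg (by have := hae j; linarith) (abs_nonneg _))
  have e2 : ∑ j ∈ s.image (· + 1), e j * |Δ j| ≤ ∑ j ∈ t, e j * |Δ j| :=
    Finset.sum_le_sum_of_subset_of_nonneg
      (Finset.subset_union_right.trans Finset.subset_union_left)
      (fun j _ _ => mul_nonneg (he0 j) (abs_nonneg _))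
  have e3 : ∑ j ∈ s.image (· - 1), a j * |Δ j| ≤ ∑ j ∈ t, a j * |Δ j| :=
    Finset.sum_le_sum_of_subset_of_nonneg Finset.subset_union_right
      (fun j _ _ => mul_nonneg (ha0 j) (abs_nonneg _))
  have hcomb : ∑ j ∈ t, (1 - a j - e j) * |Δ j| + ∑ j ∈ t, e j * |Δ j| + ∑ j ∈ t, a j * |Δ j|
      = ∑ j ∈ t, |Δ j| := by
    rw [← Finset.sum_add_distrib, ← Finset.sum_add_distrib]
    exact Finset.sum_congr rfl (fun j _ => by ring)
  have := hB t
  rw [him1] at hsplit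
  rw [him2] at hsplit
  linarith

/-- The Godunov numerical flux for `g`: `ḡ(p,q) = max{g(max(p,0)), g(min(q,0))}`. -/
noncomputable def gbar (g : ℝ → ℝ) (p q : ℝ) : ℝ :=
  max (g (max p 0)) (g (min q 0))

set_option maxHeartbeats 1000000

/-- (Lemma on the spatial variation bound for the approximations.) Under
the Panov-type assumptions (C-1)–(C-6), `u₀ ∈ BV(ℝ)` with `u₀ - u_M` compactly supported,
the uniform bound `|u_j^n| ≤ ℳ` and the CFL condition `λ L_g L_β ≤ 1/2`, there is a
mesh-independent `K₆ > 0` with `Σ_j |u_{j+1}^n - u_j^n| ≤ K₆` for every `n`; moreover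
`|u_{j+1}^n - u_j^n| ≤ (1/K₂)(|β_{j+1}^n - β_j^n| + |β(x_{j+1},u_{j+1}^n) - β(x_j,u_{j+1}^n)|)`. -/
theorem godunov_spatial_variation_bound
    -- (C-1): the flux has the form A(x,u) = g(β(x,u))
    (g : ℝ → ℝ) (β : ℝ → ℝ → ℝ) (A : ℝ → ℝ → ℝ)
    (hC1 : ∀ x u, A x u = g (β x u))
    -- (C-2)
    (zm zp : ℝ) (hzm : zm ≤ 0) (hzp : 0 ≤ zp)
    (hg_dec : StrictAntiOn g (Set.Iio zm)) (hg_inc : StrictMonoOn g (Set.Ioi zp))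
    (hg_zero : ∀ z ∈ Set.Icc zm zp, g z = 0)
    (κ : ℝ → ℝ) (hκ_cont : ContinuousOn κ (Set.Ici 0))
    (hκ_mono : StrictMonoOn κ (Set.Ici 0)) (hκ_zero : κ 0 = 0)
    (hκ_top : Tendsto κ atTop atTop)
    (hg_lbp : ∀ z, zp ≤ z → κ (z - zp) ≤ g z)
    (hg_lbm : ∀ z, z ≤ zm → κ (zm - z) ≤ g z)
    -- (C-3)
    (K₁ : ℝ → ℝ) (hK₁_cont : Continuous K₁) (hK₁_nonneg : ∀ r, 0 ≤ K₁ r)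
    (hC3 : ∀ r : ℝ, ∀ z₁ ∈ Set.Icc (-r) r, ∀ z₂ ∈ Set.Icc (-r) r,
      |g z₁ - g z₂| ≤ K₁ r * |z₁ - z₂|)
    -- (C-4)
    (Om : Set ℝ) (hOm_closed : IsClosed Om) (hOm_null : volume Om = 0)
    (hβ_cont : ContinuousOn (Function.uncurry β) (Omᶜ ×ˢ (Set.univ : Set ℝ)))
    (hβ_mono : ∀ x, StrictMono (β x))
    (hβ_inf : ∀ x, Tendsto (fun u => |β x u|) (cocompact ℝ) atTop)
    -- (C-5)
    (K₃ : ℝ → ℝ) (hK₃_cont : Continuous K₃) (hK₃_nonneg : ∀ r, 0 ≤ K₃ r)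
    (hC5a : ∀ r : ℝ, ∀ x : ℝ, ∀ u ∈ Set.Icc (-r) r, ∀ v ∈ Set.Icc (-r) r,
      |β x u - β x v| ≤ K₃ r * |u - v|)
    (K₄ : ℝ → ℝ) (hK₄_cont : Continuous K₄) (hK₄_nonneg : ∀ u, 0 ≤ K₄ u)
    (α : ℝ → ℝ) (hα_BV : BoundedVariationOn α Set.univ)
    (hC5b : ∀ x y u, |β x u - β y u| ≤ K₄ u * |α x - α y|)
    -- (C-6)
    (K₂ : ℝ) (hK₂_pos : 0 < K₂)
    (hC6 : ∀ x u v, K₂ * |u - v| ≤ |β x u - β x v|)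
    -- u_M = β⁻¹(·,0)
    (uM : ℝ → ℝ) (huM : ∀ x, β x (uM x) = 0)
    -- the Godunov scheme in β-form on the grid x_j = jΔx, λ = Δt/Δx
    (Dx Dt lam : ℝ) (hDx : 0 < Dx) (hDt : 0 < Dt) (hlam : lam = Dt / Dx)
    (u₀ : ℝ → ℝ) (u : ℕ → ℤ → ℝ)
    (h0 : ∀ j : ℤ, u 0 j = u₀ ((j : ℝ) * Dx))
    (hstep : ∀ (n : ℕ) (j : ℤ), u (n+1) j = u n j
      - lam * (gbar g (β ((j : ℝ) * Dx) (u n j)) (β (((j+1 : ℤ) : ℝ) * Dx) (u n (j+1)))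
             - gbar g (β (((j-1 : ℤ) : ℝ) * Dx) (u n (j-1))) (β ((j : ℝ) * Dx) (u n j))))
    -- ℳ bounds the approximations; 𝒫 bounds β on [-ℳ,ℳ]; CFL with L_g = K₁(𝒫), L_β = K₃(ℳ)
    (ℳ : ℝ) (hbound : ∀ (n : ℕ) (j : ℤ), |u n j| ≤ ℳ)
    (P : ℝ) (hP : ∀ x w : ℝ, |w| ≤ ℳ → |β x w| ≤ P)
    (hCFL : lam * (K₁ P * K₃ ℳ) ≤ 1/2)
    -- u₀ ∈ BV(ℝ) with u₀ - u_M compactly supported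
    (hu₀_BV : BoundedVariationOn u₀ Set.univ)
    (hu₀_supp : HasCompactSupport (fun x => u₀ x - uM x)) :
    (∃ K₆ : ℝ, 0 < K₆ ∧ ∀ n : ℕ, ∀ s : Finset ℤ,
      ∑ j ∈ s, |u n (j+1) - u n j| ≤ K₆) ∧
    (∀ (n : ℕ) (j : ℤ),
      |u n (j+1) - u n j| ≤ (1 / K₂) *
        (|β (((j+1 : ℤ) : ℝ) * Dx) (u n (j+1)) - β ((j : ℝ) * Dx) (u n j)|
          + |β (((j+1 : ℤ) : ℝ) * Dx) (u n (j+1)) - β ((j : ℝ) * Dx) (u n (j+1))|)) := by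
    classical
  have hM0 : 0 ≤ ℳ := le_trans (abs_nonneg _) (hbound 0 0)
  have hP0 : 0 ≤ P := le_trans (abs_nonneg _) (hP 0 (u 0 0) (hbound 0 0))
  have hlam0 : 0 < lam := hlam ▸ div_pos hDt hDx
  have hXmono : Monotone (fun j : ℤ => (j : ℝ) * Dx) := by
    intro i j hij
    exact mul_le_mul_of_nonneg_right (by exact_mod_cast hij) hDx.le
  set b : ℕ → ℤ → ℝ := fun n j => β ((j : ℝ) * Dx) (u n j) with hbdef
  have hb_eq : ∀ (m : ℕ) (j : ℤ), b m j = β ((j : ℝ) * Dx) (u m j) := fun m j => by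
    simp only [hbdef]
  have hbP : ∀ (m : ℕ) (j : ℤ), |b m j| ≤ P := fun m j => by
    rw [hb_eq]; exact hP _ _ (hbound m j)
  have humem : ∀ (m : ℕ) (j : ℤ), u m j ∈ Set.Icc (-ℳ) ℳ :=
    fun m j => Set.mem_Icc.mpr (abs_le.mp (hbound m j))
  have hκnn : ∀ z, 0 ≤ z → 0 ≤ κ z := by
    intro z hz
    rw [← hκ_zero]
    exact hκ_mono.monotoneOn (Set.mem_Ici.mpr le_rfl) (Set.mem_Ici.mpr hz) hz
  have hgmono : MonotoneOn g (Set.Ici 0) := by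
    intro x hx y hy hxy
    rcases le_or_gt y zp with h | h
    · rw [hg_zero x ⟨le_trans hzm hx, le_trans hxy h⟩, hg_zero y ⟨le_trans hzm hy, h⟩]
    · rcases le_or_gt x zp with h2 | h2
      · rw [hg_zero x ⟨le_trans hzm hx, h2⟩]
        exact le_trans (hκnn _ (by linarith)) (hg_lbp y h.le)
      · exact hg_inc.monotoneOn (Set.mem_Ioi.mpr h2) (Set.mem_Ioi.mpr h) hxy
  have hganti : AntitoneOn g (Set.Iic 0) := by
    intro x hx y hy hxy
    rcases le_or_gt zm x with h | h
    · rw [hg_zero x ⟨h, le_trans hx hzp⟩, hg_zero y ⟨le_trans h hxy, le_trans hy hzp⟩]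
    · rcases le_or_gt zm y with h2 | h2
      · rw [hg_zero y ⟨h2, le_trans hy hzp⟩]
        exact le_trans (hκnn _ (by linarith)) (hg_lbm x h.le)
      · exact (hg_dec.antitoneOn (Set.mem_Iio.mpr h) (Set.mem_Iio.mpr h2) hxy : g y ≤ g x)
  have memmax : ∀ p : ℝ, |p| ≤ P → max p 0 ∈ Set.Icc (-P) P := by
    intro p hp
    have h1 := abs_le.mp hp
    constructor
    · simp only [le_max_iff]; right; linarith
    · simp only [max_le_iff]; exact ⟨h1.2, hP0⟩
  have memmin : ∀ q : ℝ, |q| ≤ P → min q 0 ∈ Set.Icc (-P) P := by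
    intro q hq
    have h1 := abs_le.mp hq
    constructor
    · simp only [le_min_iff]; exact ⟨h1.1, by linarith⟩
    · simp only [min_le_iff]; right; exact hP0
  have hgb_mono : ∀ q p p' : ℝ, p ≤ p' → gbar g p q ≤ gbar g p' q := by
    intro q p p' h
    exact max_le_max (hgmono (Set.mem_Ici.mpr (le_max_right p 0))
      (Set.mem_Ici.mpr (le_max_right p' 0)) (max_le_max h le_rfl)) le_rfl
  have hgb_anti : ∀ p q q' : ℝ, q ≤ q' → gbar g p q' ≤ gbar g p q := by
    intro p q q' h
    exact max_le_max le_rfl (hganti (Set.mem_Iic.mpr (min_le_right q 0))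
      (Set.mem_Iic.mpr (min_le_right q' 0)) (min_le_min h le_rfl))
  have hgb_lip1 : ∀ q p p' : ℝ, |p| ≤ P → |p'| ≤ P →
      |gbar g p q - gbar g p' q| ≤ K₁ P * |p - p'| := by
    intro q p p' hp hp'
    calc |gbar g p q - gbar g p' q| ≤ |g (max p 0) - g (max p' 0)| :=
          abs_max_sub_max_le_abs _ _ _
      _ ≤ K₁ P * |max p 0 - max p' 0| := hC3 P _ (memmax p hp) _ (memmax p' hp')
      _ ≤ K₁ P * |p - p'| :=
          mul_le_mul_of_nonneg_left (abs_max_sub_max_le_abs _ _ _) (hK₁_nonneg P)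
  have hgb_lip2 : ∀ p q q' : ℝ, |q| ≤ P → |q'| ≤ P →
      |gbar g p q - gbar g p q'| ≤ K₁ P * |q - q'| := by
    intro p q q' hq hq'
    have h1 : |gbar g p q - gbar g p q'| ≤ |g (min q 0) - g (min q' 0)| := by
      rw [gbar, gbar, max_comm (g (max p 0)) (g (min q 0)),
        max_comm (g (max p 0)) (g (min q' 0))]
      exact abs_max_sub_max_le_abs _ _ _
    have h2 : |min q 0 - min q' 0| ≤ |q - q'| := by
      have := abs_min_sub_min_le_max q 0 q' 0
      simpa using this
    calc |gbar g p q - gbar g p q'| ≤ |g (min q 0) - g (min q' 0)| := h1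
      _ ≤ K₁ P * |min q 0 - min q' 0| := hC3 P _ (memmin q hq) _ (memmin q' hq')
      _ ≤ K₁ P * |q - q'| := mul_le_mul_of_nonneg_left h2 (hK₁_nonneg P)
  obtain ⟨c4, hc40, hc4⟩ : ∃ c4 : ℝ, 0 ≤ c4 ∧ ∀ w : ℝ, |w| ≤ ℳ → K₄ w ≤ c4 := by
    obtain ⟨w0, hw0mem, hw0⟩ := (isCompact_Icc (a := -ℳ) (b := ℳ)).exists_isMaxOn
      ⟨0, by constructor <;> linarith⟩ hK₄_cont.continuousOn
    exact ⟨K₄ w0, hK₄_nonneg _, fun w hw => hw0 (Set.mem_Icc.mpr (abs_le.mp hw))⟩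
  set Vu : ℝ := (eVariationOn u₀ Set.univ).toReal with hVu
  set Va : ℝ := (eVariationOn α Set.univ).toReal with hVa
  have hVu0 : 0 ≤ Vu := ENNReal.toReal_nonneg
  have hVa0 : 0 ≤ Va := ENNReal.toReal_nonneg
  set B : ℝ := K₃ ℳ * Vu + c4 * Va with hB
  have hB0 : 0 ≤ B := add_nonneg (mul_nonneg (hK₃_nonneg ℳ) hVu0) (mul_nonneg hc40 hVa0)
  have hαv : ∀ s : Finset ℤ, ∑ j ∈ s, |α (((j+1 : ℤ) : ℝ) * Dx) - α ((j : ℝ) * Dx)| ≤ Va :=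
    fun s => sum_abs_le_variation α hα_BV (fun j : ℤ => (j : ℝ) * Dx) hXmono s
  have huv : ∀ s : Finset ℤ, ∑ j ∈ s, |u₀ (((j+1 : ℤ) : ℝ) * Dx) - u₀ ((j : ℝ) * Dx)| ≤ Vu :=
    fun s => sum_abs_le_variation u₀ hu₀_BV (fun j : ℤ => (j : ℝ) * Dx) hXmono s
  have hxv : ∀ (n : ℕ) (j : ℤ),
      |β (((j+1 : ℤ) : ℝ) * Dx) (u n (j+1)) - β ((j : ℝ) * Dx) (u n (j+1))|
      ≤ c4 * |α (((j+1 : ℤ) : ℝ) * Dx) - α ((j : ℝ) * Dx)| := by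
    intro n j
    exact (hC5b _ _ (u n (j+1))).trans
      (mul_le_mul_of_nonneg_right (hc4 _ (hbound n (j+1))) (abs_nonneg _))
  -- base case
  have hbase : ∀ s : Finset ℤ, ∑ j ∈ s, |b 0 (j+1) - b 0 j| ≤ B := by
    intro s
    have h1 : ∀ j ∈ s, |b 0 (j+1) - b 0 j| ≤
        K₃ ℳ * |u₀ (((j+1 : ℤ) : ℝ) * Dx) - u₀ ((j : ℝ) * Dx)|
          + c4 * |α (((j+1 : ℤ) : ℝ) * Dx) - α ((j : ℝ) * Dx)| := by
      intro j _
      have hu1 : |u₀ ((j : ℝ) * Dx)| ≤ ℳ := by have := hbound 0 j; rwa [h0 j] at this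
      have hu2 : |u₀ (((j+1 : ℤ) : ℝ) * Dx)| ≤ ℳ := by
        have := hbound 0 (j+1); rwa [h0 (j+1)] at this
      have e1 : b 0 (j+1) = β (((j+1 : ℤ) : ℝ) * Dx) (u₀ (((j+1 : ℤ) : ℝ) * Dx)) := by
        rw [hb_eq, h0 (j+1)]
      have e2 : b 0 j = β ((j : ℝ) * Dx) (u₀ ((j : ℝ) * Dx)) := by
        rw [hb_eq, h0 j]
      rw [e1, e2]
      have t1 : |β (((j+1 : ℤ) : ℝ) * Dx) (u₀ (((j+1 : ℤ) : ℝ) * Dx))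
            - β (((j+1 : ℤ) : ℝ) * Dx) (u₀ ((j : ℝ) * Dx))| ≤
          K₃ ℳ * |u₀ (((j+1 : ℤ) : ℝ) * Dx) - u₀ ((j : ℝ) * Dx)| :=
        hC5a ℳ _ _ (Set.mem_Icc.mpr (abs_le.mp hu2)) _ (Set.mem_Icc.mpr (abs_le.mp hu1))
      have t2 : |β (((j+1 : ℤ) : ℝ) * Dx) (u₀ ((j : ℝ) * Dx))
            - β ((j : ℝ) * Dx) (u₀ ((j : ℝ) * Dx))| ≤
          c4 * |α (((j+1 : ℤ) : ℝ) * Dx) - α ((j : ℝ) * Dx)| :=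
        (hC5b _ _ _).trans (mul_le_mul_of_nonneg_right (hc4 _ hu1) (abs_nonneg _))
      calc |β (((j+1 : ℤ) : ℝ) * Dx) (u₀ (((j+1 : ℤ) : ℝ) * Dx))
            - β ((j : ℝ) * Dx) (u₀ ((j : ℝ) * Dx))|
          ≤ |β (((j+1 : ℤ) : ℝ) * Dx) (u₀ (((j+1 : ℤ) : ℝ) * Dx))
              - β (((j+1 : ℤ) : ℝ) * Dx) (u₀ ((j : ℝ) * Dx))|
            + |β (((j+1 : ℤ) : ℝ) * Dx) (u₀ ((j : ℝ) * Dx))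
              - β ((j : ℝ) * Dx) (u₀ ((j : ℝ) * Dx))| := abs_sub_le _ _ _
        _ ≤ _ := add_le_add t1 t2
    calc ∑ j ∈ s, |b 0 (j+1) - b 0 j|
        ≤ ∑ j ∈ s, (K₃ ℳ * |u₀ (((j+1 : ℤ) : ℝ) * Dx) - u₀ ((j : ℝ) * Dx)|
            + c4 * |α (((j+1 : ℤ) : ℝ) * Dx) - α ((j : ℝ) * Dx)|) :=
          Finset.sum_le_sum h1
      _ = K₃ ℳ * ∑ j ∈ s, |u₀ (((j+1 : ℤ) : ℝ) * Dx) - u₀ ((j : ℝ) * Dx)|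
          + c4 * ∑ j ∈ s, |α (((j+1 : ℤ) : ℝ) * Dx) - α ((j : ℝ) * Dx)| := by
          rw [Finset.sum_add_distrib, Finset.mul_sum, Finset.mul_sum]
      _ ≤ K₃ ℳ * Vu + c4 * Va :=
          add_le_add (mul_le_mul_of_nonneg_left (huv s) (hK₃_nonneg ℳ))
            (mul_le_mul_of_nonneg_left (hαv s) hc40)
  -- inductive step
  have hind : ∀ n : ℕ, (∀ s : Finset ℤ, ∑ j ∈ s, |b n (j+1) - b n j| ≤ B) →
      ∀ s : Finset ℤ, ∑ j ∈ s, |b (n+1) (j+1) - b (n+1) j| ≤ B := by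
    intro n ih
    have hsub1 : ∀ j : ℤ, j - 1 + 1 = j := fun j => by ring
    set G : ℤ → ℝ := fun j => gbar g (b n j) (b n (j+1)) with hGdef
    have hG_eq : ∀ j, G j = gbar g (b n j) (b n (j+1)) := fun j => by simp only [hGdef]
    set d : ℤ → ℝ := fun j => G j - G (j-1) with hddef
    have hd_eq0 : ∀ j, d j = G j - G (j-1) := fun j => by simp only [hddef]
    have hstep' : ∀ j : ℤ, u (n+1) j = u n j - lam * d j := by
      intro j
      have hdj : d j = gbar g (β ((j : ℝ) * Dx) (u n j)) (β (((j+1 : ℤ) : ℝ) * Dx) (u n (j+1)))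
          - gbar g (β (((j-1 : ℤ) : ℝ) * Dx) (u n (j-1))) (β ((j : ℝ) * Dx) (u n j)) := by
        rw [hd_eq0 j, hG_eq j, hG_eq (j-1), hsub1 j]
      rw [hstep n j, hdj]
    set Δ : ℤ → ℝ := fun j => b n (j+1) - b n j with hΔdef
    have hΔ_eq : ∀ j, Δ j = b n (j+1) - b n j := fun j => by simp only [hΔdef]
    set Δ' : ℤ → ℝ := fun j => b (n+1) (j+1) - b (n+1) j with hΔ'def
    have hΔ'_eq : ∀ j, Δ' j = b (n+1) (j+1) - b (n+1) j := fun j => by simp only [hΔ'def]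
    set θ : ℤ → ℝ := fun j => if u n j - u (n+1) j = 0 then 0
      else (b n j - b (n+1) j) / (u n j - u (n+1) j) with hθdef
    have hθ_eq : ∀ j, θ j = if u n j - u (n+1) j = 0 then 0
      else (b n j - b (n+1) j) / (u n j - u (n+1) j) := fun j => by simp only [hθdef]
    set p : ℤ → ℝ := fun j => if Δ j = 0 then 0
      else (gbar g (b n (j+1)) (b n (j+1)) - gbar g (b n j) (b n (j+1))) / Δ j with hpdef
    have hp_eq : ∀ j, p j = if Δ j = 0 then 0
      else (gbar g (b n (j+1)) (b n (j+1)) - gbar g (b n j) (b n (j+1))) / Δ j :=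
      fun j => by simp only [hpdef]
    set q : ℤ → ℝ := fun j => if Δ j = 0 then 0
      else (gbar g (b n j) (b n j) - gbar g (b n j) (b n (j+1))) / Δ j with hqdef
    have hq_eq : ∀ j, q j = if Δ j = 0 then 0
      else (gbar g (b n j) (b n j) - gbar g (b n j) (b n (j+1))) / Δ j :=
      fun j => by simp only [hqdef]
    -- θ bounds
    have hθb : ∀ j, 0 ≤ θ j ∧ θ j ≤ K₃ ℳ := by
      intro j
      rw [hθ_eq j]
      by_cases h : u n j - u (n+1) j = 0
      · rw [if_pos h]; exact ⟨le_rfl, hK₃_nonneg ℳ⟩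
      · rw [if_neg h]
        refine aux_ratio ?_ ?_ h
        · rcases (sub_ne_zero.mp h).lt_or_gt with hlt | hgt
          · have h1 : β ((j : ℝ) * Dx) (u n j) < β ((j : ℝ) * Dx) (u (n+1) j) := hβ_mono _ hlt
            rw [← hb_eq n j, ← hb_eq (n+1) j] at h1
            nlinarith [sub_ne_zero.mp h, hlt]
          · have h1 : β ((j : ℝ) * Dx) (u (n+1) j) < β ((j : ℝ) * Dx) (u n j) := hβ_mono _ hgt
            rw [← hb_eq n j, ← hb_eq (n+1) j] at h1
            nlinarith [hgt]
        · rw [hb_eq n j, hb_eq (n+1) j]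
          exact hC5a ℳ _ _ (humem n j) _ (humem (n+1) j)
    -- p and q bounds
    have hpb : ∀ j, 0 ≤ p j ∧ p j ≤ K₁ P := by
      intro j
      rw [hp_eq j]
      by_cases h : Δ j = 0
      · rw [if_pos h]; exact ⟨le_rfl, hK₁_nonneg P⟩
      · rw [if_neg h]
        have h' : b n (j+1) - b n j ≠ 0 := by rw [← hΔ_eq j]; exact h
        refine aux_ratio ?_ ?_ h
        · rcases (sub_ne_zero.mp h').lt_or_gt with hlt | hgt
          · have hnum : gbar g (b n (j+1)) (b n (j+1)) ≤ gbar g (b n j) (b n (j+1)) :=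
              hgb_mono _ _ _ hlt.le
            have hΔlt : Δ j < 0 := by rw [hΔ_eq j]; exact sub_neg.mpr hlt
            nlinarith
          · have hnum : gbar g (b n j) (b n (j+1)) ≤ gbar g (b n (j+1)) (b n (j+1)) :=
              hgb_mono _ _ _ hgt.le
            have hΔgt : 0 < Δ j := by rw [hΔ_eq j]; exact sub_pos.mpr hgt
            nlinarith
        · rw [hΔ_eq j]
          exact hgb_lip1 _ _ _ (hbP n (j+1)) (hbP n j)
    have hqb : ∀ j, 0 ≤ q j ∧ q j ≤ K₁ P := by
      intro j
      rw [hq_eq j]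
      by_cases h : Δ j = 0
      · rw [if_pos h]; exact ⟨le_rfl, hK₁_nonneg P⟩
      · rw [if_neg h]
        have h' : b n (j+1) - b n j ≠ 0 := by rw [← hΔ_eq j]; exact h
        refine aux_ratio ?_ ?_ h
        · rcases (sub_ne_zero.mp h').lt_or_gt with hlt | hgt
          · have hnum : gbar g (b n j) (b n j) ≤ gbar g (b n j) (b n (j+1)) :=
              hgb_anti _ _ _ hlt.le
            have hΔlt : Δ j < 0 := by rw [hΔ_eq j]; exact sub_neg.mpr hlt
            nlinarith
          · have hnum : gbar g (b n j) (b n (j+1)) ≤ gbar g (b n j) (b n j) :=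
              hgb_anti _ _ _ hgt.le
            have hΔgt : 0 < Δ j := by rw [hΔ_eq j]; exact sub_pos.mpr hgt
            nlinarith
        · rw [hΔ_eq j, abs_sub_comm (b n (j+1)) (b n j)]
          exact hgb_lip2 _ _ _ (hbP n j) (hbP n (j+1))
    -- identities
    have hbid : ∀ j, b (n+1) j = b n j - θ j * (lam * d j) := by
      intro j
      have hden : u n j - u (n+1) j = lam * d j := by rw [hstep' j]; ring
      rw [hθ_eq j]
      by_cases h : u n j - u (n+1) j = 0
      · have hu : u (n+1) j = u n j := by
          have := sub_eq_zero.mp h; linarith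
        have hb0 : b (n+1) j = b n j := by rw [hb_eq, hb_eq, hu]
        rw [if_pos h, hb0, ← hden, h]
        ring
      · rw [if_neg h, ← hden, div_mul_cancel₀ _ h]
        ring
    have hIp : ∀ j, gbar g (b n (j+1)) (b n (j+1)) - gbar g (b n j) (b n (j+1)) = p j * Δ j := by
      intro j
      rw [hp_eq j]
      by_cases h : Δ j = 0
      · have h'' : b n (j+1) - b n j = 0 := by rw [← hΔ_eq j]; exact h
        have heq : b n (j+1) = b n j := sub_eq_zero.mp h''
        rw [heq, if_pos h, zero_mul, sub_self]
      · rw [if_neg h, div_mul_cancel₀ _ h]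
    have hIq : ∀ j, gbar g (b n j) (b n j) - gbar g (b n j) (b n (j+1)) = q j * Δ j := by
      intro j
      rw [hq_eq j]
      by_cases h : Δ j = 0
      · have h'' : b n (j+1) - b n j = 0 := by rw [← hΔ_eq j]; exact h
        have heq : b n (j+1) = b n j := sub_eq_zero.mp h''
        rw [heq, if_pos h, zero_mul, sub_self]
      · rw [if_neg h, div_mul_cancel₀ _ h]
    have hd_eq : ∀ j, d j = p (j-1) * Δ (j-1) - q j * Δ j := by
      intro j
      have h1 := hIq j
      have h2 := hIp (j-1)
      rw [hsub1 j] at h2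
      have hGj : d j = gbar g (b n j) (b n (j+1)) - gbar g (b n (j-1)) (b n j) := by
        rw [hd_eq0 j, hG_eq j, hG_eq (j-1), hsub1 j]
      linarith
    -- Harten coefficients
    set a : ℤ → ℝ := fun j => lam * θ (j+1) * p j with hadef
    have ha_eq : ∀ j, a j = lam * θ (j+1) * p j := fun j => by simp only [hadef]
    set e : ℤ → ℝ := fun j => lam * θ j * q j with hedef
    have he_eq : ∀ j, e j = lam * θ j * q j := fun j => by simp only [hedef]
    have hab : ∀ j, 0 ≤ a j ∧ a j ≤ 1/2 := by
      intro j
      rw [ha_eq j]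
      obtain ⟨hθ0, hθ1⟩ := hθb (j+1)
      obtain ⟨hp0, hp1⟩ := hpb j
      constructor
      · exact mul_nonneg (mul_nonneg hlam0.le hθ0) hp0
      · have t1 : lam * θ (j+1) ≤ lam * K₃ ℳ := mul_le_mul_of_nonneg_left hθ1 hlam0.le
        have t2 : lam * θ (j+1) * p j ≤ (lam * K₃ ℳ) * K₁ P :=
          mul_le_mul t1 hp1 hp0 (mul_nonneg hlam0.le (hK₃_nonneg ℳ))
        have t3 : (lam * K₃ ℳ) * K₁ P = lam * (K₁ P * K₃ ℳ) := by ring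
        linarith
    have heb : ∀ j, 0 ≤ e j ∧ e j ≤ 1/2 := by
      intro j
      rw [he_eq j]
      obtain ⟨hθ0, hθ1⟩ := hθb j
      obtain ⟨hq0, hq1⟩ := hqb j
      constructor
      · exact mul_nonneg (mul_nonneg hlam0.le hθ0) hq0
      · have t1 : lam * θ j ≤ lam * K₃ ℳ := mul_le_mul_of_nonneg_left hθ1 hlam0.le
        have t2 : lam * θ j * q j ≤ (lam * K₃ ℳ) * K₁ P :=
          mul_le_mul t1 hq1 hq0 (mul_nonneg hlam0.le (hK₃_nonneg ℳ))
        have t3 : (lam * K₃ ℳ) * K₁ P = lam * (K₁ P * K₃ ℳ) := by ring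
        linarith
    -- key decomposition
    have hkey : ∀ j, Δ' j = (1 - a j - e j) * Δ j + e (j+1) * Δ (j+1) + a (j-1) * Δ (j-1) := by
      intro j
      have h1 := hbid (j+1)
      have h2 := hbid j
      have h3 := hd_eq (j+1)
      rw [show (j+1-1 : ℤ) = j from by ring] at h3
      have h4 := hd_eq j
      have haj' : a (j-1) = lam * θ j * p (j-1) := by rw [ha_eq (j-1), hsub1 j]
      rw [hΔ'_eq j, h1, h2, h3, h4, ha_eq j, he_eq j, haj', he_eq (j+1), hΔ_eq j]
      ring
    have hrec : ∀ j, |Δ' j| ≤ (1 - a j - e j) * |Δ j| + e (j+1) * |Δ (j+1)|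
        + a (j-1) * |Δ (j-1)| := by
      intro j
      obtain ⟨ha0, ha1⟩ := hab j
      obtain ⟨he0, he1⟩ := heb j
      obtain ⟨ha0', _⟩ := hab (j-1)
      obtain ⟨he0', _⟩ := heb (j+1)
      have hco : (0:ℝ) ≤ 1 - a j - e j := by linarith
      rw [hkey j]
      calc |(1 - a j - e j) * Δ j + e (j+1) * Δ (j+1) + a (j-1) * Δ (j-1)|
          ≤ |(1 - a j - e j) * Δ j + e (j+1) * Δ (j+1)| + |a (j-1) * Δ (j-1)| := abs_add_le _ _
        _ ≤ |(1 - a j - e j) * Δ j| + |e (j+1) * Δ (j+1)| + |a (j-1) * Δ (j-1)| := by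
            linarith [abs_add_le ((1 - a j - e j) * Δ j) (e (j+1) * Δ (j+1))]
        _ = (1 - a j - e j) * |Δ j| + e (j+1) * |Δ (j+1)| + a (j-1) * |Δ (j-1)| := by
            have r1 : |(1 - a j - e j) * Δ j| = (1 - a j - e j) * |Δ j| := by
              rw [abs_mul, abs_of_nonneg hco]
            have r2 : |e (j+1) * Δ (j+1)| = e (j+1) * |Δ (j+1)| := by
              rw [abs_mul, abs_of_nonneg he0']
            have r3 : |a (j-1) * Δ (j-1)| = a (j-1) * |Δ (j-1)| := by
              rw [abs_mul, abs_of_nonneg ha0']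
            rw [r1, r2, r3]
    have hB' : ∀ s : Finset ℤ, ∑ j ∈ s, |Δ j| ≤ B := by
      intro s
      calc ∑ j ∈ s, |Δ j| = ∑ j ∈ s, |b n (j+1) - b n j| :=
            Finset.sum_congr rfl (fun j _ => by rw [hΔ_eq j])
        _ ≤ B := ih s
    intro s
    have hout := harten_sum Δ Δ' a e (fun j => (hab j).1) (fun j => (heb j).1)
      (fun j => by linarith [(hab j).2, (heb j).2]) hrec B hB' s
    calc ∑ j ∈ s, |b (n+1) (j+1) - b (n+1) j| = ∑ j ∈ s, |Δ' j| :=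
          Finset.sum_congr rfl (fun j _ => by rw [hΔ'_eq j])
      _ ≤ B := hout
  -- uniform bound on the β-variation
  have hvar : ∀ (n : ℕ) (s : Finset ℤ), ∑ j ∈ s, |b n (j+1) - b n j| ≤ B := by
    intro n
    induction n with
    | zero => exact hbase
    | succ n ihn => exact hind n ihn
  -- part 2
  have hpt2 : ∀ (n : ℕ) (j : ℤ),
      |u n (j+1) - u n j| ≤ (1 / K₂) *
        (|β (((j+1 : ℤ) : ℝ) * Dx) (u n (j+1)) - β ((j : ℝ) * Dx) (u n j)|
          + |β (((j+1 : ℤ) : ℝ) * Dx) (u n (j+1)) - β ((j : ℝ) * Dx) (u n (j+1))|) := by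
    intro n j
    have h1 : K₂ * |u n (j+1) - u n j| ≤
        |β ((j : ℝ) * Dx) (u n (j+1)) - β ((j : ℝ) * Dx) (u n j)| := hC6 _ _ _
    have h2 : |β ((j : ℝ) * Dx) (u n (j+1)) - β ((j : ℝ) * Dx) (u n j)| ≤
        |β (((j+1 : ℤ) : ℝ) * Dx) (u n (j+1)) - β ((j : ℝ) * Dx) (u n j)|
          + |β (((j+1 : ℤ) : ℝ) * Dx) (u n (j+1)) - β ((j : ℝ) * Dx) (u n (j+1))| := by
      have e0 : β ((j : ℝ) * Dx) (u n (j+1)) - β ((j : ℝ) * Dx) (u n j)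
          = (β (((j+1 : ℤ) : ℝ) * Dx) (u n (j+1)) - β ((j : ℝ) * Dx) (u n j))
            - (β (((j+1 : ℤ) : ℝ) * Dx) (u n (j+1)) - β ((j : ℝ) * Dx) (u n (j+1))) := by
        ring
      rw [e0]
      exact abs_sub _ _
    have h3 : |u n (j+1) - u n j| * K₂ ≤
        |β (((j+1 : ℤ) : ℝ) * Dx) (u n (j+1)) - β ((j : ℝ) * Dx) (u n j)|
          + |β (((j+1 : ℤ) : ℝ) * Dx) (u n (j+1)) - β ((j : ℝ) * Dx) (u n (j+1))| := by
      nlinarith [h1, h2]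
    calc |u n (j+1) - u n j| ≤
        (|β (((j+1 : ℤ) : ℝ) * Dx) (u n (j+1)) - β ((j : ℝ) * Dx) (u n j)|
          + |β (((j+1 : ℤ) : ℝ) * Dx) (u n (j+1)) - β ((j : ℝ) * Dx) (u n (j+1))|) / K₂ :=
          (le_div_iff₀ hK₂_pos).mpr h3
      _ = (1 / K₂) *
        (|β (((j+1 : ℤ) : ℝ) * Dx) (u n (j+1)) - β ((j : ℝ) * Dx) (u n j)|
          + |β (((j+1 : ℤ) : ℝ) * Dx) (u n (j+1)) - β ((j : ℝ) * Dx) (u n (j+1))|) := by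
          ring
  refine ⟨⟨(1 / K₂) * (B + c4 * Va) + 1, by positivity, ?_⟩, hpt2⟩
  intro n s
  have h1 : ∀ j ∈ s, |u n (j+1) - u n j| ≤
      (1 / K₂) * |b n (j+1) - b n j|
        + (1 / K₂) * |β (((j+1 : ℤ) : ℝ) * Dx) (u n (j+1)) - β ((j : ℝ) * Dx) (u n (j+1))| := by
    intro j _
    have := hpt2 n j
    rw [show |β (((j+1 : ℤ) : ℝ) * Dx) (u n (j+1)) - β ((j : ℝ) * Dx) (u n j)|
        = |b n (j+1) - b n j| from by rw [hb_eq n (j+1), hb_eq n j]] at this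
    linarith [this, mul_add (1/K₂) (|b n (j+1) - b n j|)
      (|β (((j+1 : ℤ) : ℝ) * Dx) (u n (j+1)) - β ((j : ℝ) * Dx) (u n (j+1))|)]
  have h3 : ∑ j ∈ s, |β (((j+1 : ℤ) : ℝ) * Dx) (u n (j+1)) - β ((j : ℝ) * Dx) (u n (j+1))|
      ≤ c4 * Va := by
    calc ∑ j ∈ s, |β (((j+1 : ℤ) : ℝ) * Dx) (u n (j+1)) - β ((j : ℝ) * Dx) (u n (j+1))|
        ≤ ∑ j ∈ s, c4 * |α (((j+1 : ℤ) : ℝ) * Dx) - α ((j : ℝ) * Dx)| :=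
          Finset.sum_le_sum (fun j _ => hxv n j)
      _ = c4 * ∑ j ∈ s, |α (((j+1 : ℤ) : ℝ) * Dx) - α ((j : ℝ) * Dx)| := by
          rw [Finset.mul_sum]
      _ ≤ c4 * Va := mul_le_mul_of_nonneg_left (hαv s) hc40
  have h4 := hvar n s
  have hK₂' : (0:ℝ) ≤ 1 / K₂ := by positivity
  calc ∑ j ∈ s, |u n (j+1) - u n j|
      ≤ ∑ j ∈ s, ((1 / K₂) * |b n (j+1) - b n j|
        + (1 / K₂) * |β (((j+1 : ℤ) : ℝ) * Dx) (u n (j+1)) - β ((j : ℝ) * Dx) (u n (j+1))|) :=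
        Finset.sum_le_sum h1
    _ = (1 / K₂) * ∑ j ∈ s, |b n (j+1) - b n j|
        + (1 / K₂) * ∑ j ∈ s, |β (((j+1 : ℤ) : ℝ) * Dx) (u n (j+1)) - β ((j : ℝ) * Dx) (u n (j+1))| := by
        rw [Finset.sum_add_distrib, Finset.mul_sum, Finset.mul_sum]
    _ ≤ (1 / K₂) * B + (1 / K₂) * (c4 * Va) :=
        add_le_add (mul_le_mul_of_nonneg_left h4 hK₂') (mul_le_mul_of_nonneg_left h3 hK₂')
    _ ≤ (1 / K₂) * (B + c4 * Va) + 1 := by linarith [mul_add (1/K₂) B (c4 * Va)]
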